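/- The triple integral ∫₀¹∫₀¹∫₀¹ 1/(1 − xyz) dx dy dz converges and equals ζ(3) = ∑_{k=1}^{∞} 1/k³. -/

import Mathlib

open MeasureTheory

lemma mono_int (k : ℕ) : ∫ x in Set.Icc (0:ℝ) 1, x ^ k = 1 / ((k : ℝ) + 1) := by
  rw [MeasureTheory.integral_Icc_eq_integral_Ioc,
    ← intervalIntegral.integral_of_le (zero_le_one (α := ℝ))]
  simp [integral_pow]

lemma cube_int (k : ℕ) :
    ∫ p in (Set.Icc (0:ℝ) 1 ×ˢ Set.Icc (0:ℝ) 1 ×ˢ Set.Icc (0:ℝ) 1),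
      (p.1 * p.2.1 * p.2.2) ^ k = 1 / ((k : ℝ) + 1) ^ 3 := by
  have h : ∀ p : ℝ × ℝ × ℝ, (p.1 * p.2.1 * p.2.2) ^ k
      = p.1 ^ k * ((fun q : ℝ × ℝ => q.1 ^ k * q.2 ^ k) p.2) := by
    intro p; simp; ring
  simp_rw [h]
  rw [MeasureTheory.Measure.volume_eq_prod,
    setIntegral_prod_mul (fun x : ℝ => x ^ k) (fun q : ℝ × ℝ => q.1 ^ k * q.2 ^ k),
    MeasureTheory.Measure.volume_eq_prod,
    setIntegral_prod_mul (fun x : ℝ => x ^ k) (fun x : ℝ => x ^ k)]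
  rw [mono_int]
  have hk : ((k:ℝ) + 1) ≠ 0 := by positivity
  field_simp

lemma zeta3_summable : Summable (fun k : ℕ => 1 / ((k : ℝ) + 1) ^ 3) := by
  have h : Summable (fun n : ℕ => 1 / (n : ℝ) ^ 3) :=
    Real.summable_one_div_nat_pow.mpr (by norm_num)
  have := (summable_nat_add_iff 1).mpr h
  simpa [Nat.cast_add] using this

theorem stmt_4 :
    IntegrableOn (fun p : ℝ × ℝ × ℝ => 1 / (1 - p.1 * p.2.1 * p.2.2))
      (Set.Icc 0 1 ×ˢ Set.Icc 0 1 ×ˢ Set.Icc 0 1) volume ∧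
    (∫ p in (Set.Icc (0 : ℝ) 1 ×ˢ Set.Icc (0 : ℝ) 1 ×ˢ Set.Icc (0 : ℝ) 1),
        1 / (1 - p.1 * p.2.1 * p.2.2)) =
      ∑' k : ℕ, 1 / ((k : ℝ) + 1) ^ 3 := by
  set S : Set (ℝ × ℝ × ℝ) := Set.Icc 0 1 ×ˢ Set.Icc 0 1 ×ˢ Set.Icc 0 1 with hSdef
  set f : ℝ × ℝ × ℝ → ℝ := fun p => 1 / (1 - p.1 * p.2.1 * p.2.2) with hfdef
  have hS : MeasurableSet S :=
    measurableSet_Icc.prod (measurableSet_Icc.prod measurableSet_Icc)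
  have hfm : Measurable f := by
    apply Measurable.div measurable_const
    fun_prop
  -- membership facts
  have hmem : ∀ p ∈ S, 0 ≤ p.1 * p.2.1 * p.2.2 ∧ p.1 * p.2.1 * p.2.2 ≤ 1 := by
    rintro ⟨x, y, z⟩ ⟨⟨hx0, hx1⟩, ⟨hy0, hy1⟩, ⟨hz0, hz1⟩⟩
    constructor
    · positivity
    · calc x * y * z ≤ 1 * 1 * 1 := by
            apply mul_le_mul (mul_le_mul hx1 hy1 hy0 zero_le_one) hz1 hz0 (by norm_num)
      _ = 1 := by norm_num
  have hnn : ∀ p ∈ S, 0 ≤ f p := by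
    intro p hp
    have := (hmem p hp).2
    apply div_nonneg zero_le_one
    linarith
  -- a.e. strict inequality
  have hlt : ∀ p ∈ S, p ≠ ((1:ℝ), (1:ℝ), (1:ℝ)) → p.1 * p.2.1 * p.2.2 < 1 := by
    rintro ⟨x, y, z⟩ ⟨⟨hx0, hx1⟩, ⟨hy0, hy1⟩, ⟨hz0, hz1⟩⟩ hne
    rcases lt_or_eq_of_le hx1 with h | h
    · calc x * y * z ≤ x * 1 * 1 := by
            apply mul_le_mul (mul_le_mul le_rfl hy1 hy0 hx0) hz1 hz0 (by positivity)
      _ = x := by ring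
      _ < 1 := h
    · rcases lt_or_eq_of_le hy1 with h' | h'
      · calc x * y * z ≤ 1 * y * 1 := by
              apply mul_le_mul (mul_le_mul hx1 le_rfl hy0 zero_le_one) hz1 hz0 (by positivity)
        _ = y := by ring
        _ < 1 := h'
      · rcases lt_or_eq_of_le hz1 with h'' | h''
        · calc x * y * z ≤ 1 * 1 * z := by
                apply mul_le_mul (mul_le_mul hx1 hy1 hy0 zero_le_one) le_rfl hz0 (by norm_num)
          _ = z := by ring
          _ < 1 := h''
        · exact absurd (by simp only [Prod.mk.injEq]; exact ⟨h, h', h''⟩) hne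
  have hsing : volume ({((1:ℝ), (1:ℝ), (1:ℝ))} : Set (ℝ × ℝ × ℝ)) = 0 := by
    have hsub : ({((1:ℝ), (1:ℝ), (1:ℝ))} : Set (ℝ × ℝ × ℝ))
        ⊆ ({1} : Set ℝ) ×ˢ (Set.univ : Set (ℝ × ℝ)) := by
      rintro p hp
      simp_all [Set.mem_singleton_iff]
    refine le_antisymm (le_trans (measure_mono hsub) ?_) zero_le
    rw [MeasureTheory.Measure.volume_eq_prod, Measure.prod_prod]
    simp
  have hne_ae : ∀ᵐ p ∂(volume.restrict S), p ≠ ((1:ℝ), (1:ℝ), (1:ℝ)) :=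
    ae_restrict_of_ae (by
      rw [ae_iff]
      convert hsing using 2
      ext p; simp)
  have hmem_ae : ∀ᵐ p ∂(volume.restrict S), p ∈ S := ae_restrict_mem hS
  -- each monomial integrable on S
  have hint : ∀ k : ℕ, IntegrableOn (fun p : ℝ × ℝ × ℝ => (p.1 * p.2.1 * p.2.2) ^ k) S volume := by
    intro k
    apply ContinuousOn.integrableOn_compact
      (isCompact_Icc.prod (isCompact_Icc.prod isCompact_Icc))
    fun_prop
  have hmono_nn : ∀ k : ℕ, ∀ᵐ p ∂(volume.restrict S),
      0 ≤ (p.1 * p.2.1 * p.2.2) ^ k := by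
    intro k
    filter_upwards [hmem_ae] with p hp
    exact pow_nonneg (hmem p hp).1 k
  -- lintegral of each monomial
  have hlin : ∀ k : ℕ, ∫⁻ p in S, ENNReal.ofReal ((p.1 * p.2.1 * p.2.2) ^ k)
      = ENNReal.ofReal (1 / ((k : ℝ) + 1) ^ 3) := by
    intro k
    rw [← ofReal_integral_eq_lintegral_ofReal (hint k) (hmono_nn k), cube_int k]
  -- key lintegral computation
  have key : ∫⁻ p in S, ENNReal.ofReal (f p)
      = ENNReal.ofReal (∑' k : ℕ, 1 / ((k : ℝ) + 1) ^ 3) := by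
    have hae : ∀ᵐ p ∂(volume.restrict S),
        ENNReal.ofReal (f p) = ∑' k : ℕ, ENNReal.ofReal ((p.1 * p.2.1 * p.2.2) ^ k) := by
      filter_upwards [hmem_ae, hne_ae] with p hp hpne
      have h0 := (hmem p hp).1
      have h1 := hlt p hp hpne
      rw [← ENNReal.ofReal_tsum_of_nonneg (fun n => pow_nonneg h0 n)
        (summable_geometric_of_lt_one h0 h1)]
      congr 1
      rw [tsum_geometric_of_lt_one h0 h1]; simp only [hfdef, one_div]
    rw [lintegral_congr_ae hae, lintegral_tsum (fun k => by fun_prop)]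
    simp_rw [hlin]
    rw [← ENNReal.ofReal_tsum_of_nonneg (fun k => by positivity) zeta3_summable]
  have hnn_ae : 0 ≤ᵐ[volume.restrict S] f := by
    filter_upwards [hmem_ae] with p hp using hnn p hp
  have hfin : Integrable f (volume.restrict S) := by
    refine ⟨hfm.aestronglyMeasurable, ?_⟩
    rw [HasFiniteIntegral]
    have : ∫⁻ p in S, ‖f p‖ₑ = ∫⁻ p in S, ENNReal.ofReal (f p) := by
      apply lintegral_congr_ae
      filter_upwards [hnn_ae] with p hp
      exact Real.enorm_eq_ofReal hp
    rw [this, key]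
    exact ENNReal.ofReal_lt_top
  refine ⟨hfin, ?_⟩
  rw [integral_eq_lintegral_of_nonneg_ae hnn_ae hfm.aestronglyMeasurable, key,
    ENNReal.toReal_ofReal (tsum_nonneg fun k => by positivity)]
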